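/- For every word u ∈ S^0 and every integer n ≥ 0, the concatenation u x0^n satisfies u x0^n = Σ_{j=0}^n reg^0(u x0^{n−j}) ⧢ x0^j, and reg^0(u x0^n) = Σ_{j=0}^n (−1)^j (u x0^{n−j}) ⧢ x0^j. -/

import Mathlib

open scoped BigOperators

namespace MZVRH

noncomputable section

/-- A word over the two-letter alphabet: `false` stands for `x0`, `true` for `x1`. -/
abbrev Word : Type := List Bool

/-- The shuffle algebra `S`: the free ℂ-vector space on words. -/
abbrev S : Type := Word →₀ ℂ

/-- The word `w` viewed as an element of `S`. -/
def wordS (w : Word) : S := Finsupp.single w 1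

/-- Shuffle product of two words, as an element of `S`. -/
def shWord : Word → Word → S
  | [], v => Finsupp.single v 1
  | u, [] => Finsupp.single u 1
  | a :: u, b :: v =>
      (shWord u (b :: v)).mapDomain (a :: ·)
        + (shWord (a :: u) v).mapDomain (b :: ·)
  termination_by u v => u.length + v.length
  decreasing_by all_goals simp [List.length_cons]

/-- The bilinear extension of the shuffle product to `S`. -/
def sh (x y : S) : S := x.sum fun u a => y.sum fun v b => (a * b) • shWord u v

/-- The word `x0^j`. -/
def x0pow (j : ℕ) : Word := List.replicate j false

/-- The word `x1^i`. -/
def x1pow (i : ℕ) : Word := List.replicate i true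

/-- A word is empty or ends in `x1`. -/
def EndsInX1 (w : Word) : Prop := w = [] ∨ w.getLast? = some true

/-- A word is empty or begins with `x0` and ends in `x1`. -/
def BeginsEndsX0X1 (w : Word) : Prop :=
  w = [] ∨ (w.head? = some false ∧ w.getLast? = some true)

/-- Membership in the subspace `S^0` spanned by the empty word and words ending in `x1`. -/
def InS0 (x : S) : Prop := ∀ w ∈ x.support, EndsInX1 w

/-- Membership in the subspace `S^{10}` spanned by the empty word and words beginning
with `x0` and ending in `x1`. -/
def InS10 (x : S) : Prop := ∀ w ∈ x.support, BeginsEndsX0X1 w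

/-- `Σ_j w_j ⧢ x0^j` for a finitely supported family `f : ℕ →₀ S`. -/
def decomp0Sum (f : ℕ →₀ S) : S := f.sum fun j w => sh w (wordS (x0pow j))

/-- `Σ_{i,j} x1^i ⧢ w_{ij} ⧢ x0^j` for a finitely supported family `f : ℕ × ℕ →₀ S`. -/
def decomp10Sum (f : ℕ × ℕ →₀ S) : S :=
  f.sum fun p w => sh (wordS (x1pow p.1)) (sh w (wordS (x0pow p.2)))

/-- `f` is a decomposition of `u` with coefficients in `S^0`. -/
def HasDecomp0 (u : S) (f : ℕ →₀ S) : Prop := (∀ j, InS0 (f j)) ∧ u = decomp0Sum f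

/-- `f` is a decomposition of `u` with coefficients in `S^{10}`. -/
def HasDecomp10 (u : S) (f : ℕ × ℕ →₀ S) : Prop :=
  (∀ p, InS10 (f p)) ∧ u = decomp10Sum f

open Classical in
/-- The regularization map `reg^0 : S → S^0`, the constant term of the decomposition
of `u` as a polynomial in `x0` with coefficients in `S^0`. -/
def reg0 (u : S) : S := if h : ∃ f, HasDecomp0 u f then h.choose 0 else 0

open Classical in
/-- The regularization map `reg^{10} : S → S^{10}`, the constant term of the decomposition
of `u` as a polynomial in `x0, x1` with coefficients in `S^{10}`. -/
def reg10 (u : S) : S := if h : ∃ f, HasDecomp10 u f then h.choose (0, 0) else 0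

/-- `τ`: reverse the word and exchange `x0` with `x1`. -/
def tau (w : Word) : Word := (w.map (fun b => !b)).reverse

/-- The composition `(k1, …, kr)` attached to a word `x0^{k1-1} x1 ⋯ x0^{kr-1} x1 ∈ S^0`. -/
def toComp : Word → List ℕ
  | [] => []
  | false :: w =>
      match toComp w with
      | [] => []
      | k :: ks => (k + 1) :: ks
  | true :: w => 1 :: toComp w

/-- Strictly decreasing tuples of positive integers `n1 > n2 > ⋯ > nr > 0`. -/
def Tuples (r : ℕ) : Type := {f : Fin r → ℕ // StrictAnti f ∧ ∀ i, 0 < f i}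

/-- The multiple polylogarithm `Li_{k1,…,kr}(z) = Σ_{n1 > ⋯ > nr > 0} z^{n1}/(n1^{k1} ⋯ nr^{kr})`,
attached to a composition `ks = (k1, …, kr)`; equal to `1` for the empty composition. -/
def LiComp (ks : List ℕ) (z : ℂ) : ℂ :=
  ∑' n : Tuples ks.length,
    (if h : 0 < ks.length then z ^ n.1 ⟨0, h⟩ else 1) /
      ∏ i : Fin ks.length, (n.1 i : ℂ) ^ ks.get i

/-- The multiple zeta value `ζ(k1,…,kr) = Σ_{n1 > ⋯ > nr > 0} 1/(n1^{k1} ⋯ nr^{kr})`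
attached to a composition; equal to `1` for the empty composition. -/
def zetaComp (ks : List ℕ) : ℂ :=
  ∑' n : Tuples ks.length, 1 / ∏ i : Fin ks.length, (n.1 i : ℂ) ^ ks.get i

/-- The ℂ-linear extension of `w ↦ Li(w; z)` to elements of `S` supported on `S^0` words. -/
def LiS0 (x : S) (z : ℂ) : ℂ := x.sum fun w c => c * LiComp (toComp w) z

/-- The ℂ-linear extension of `w ↦ ζ(w)` to elements of `S` supported on `S^{10}` words. -/
def zetaS (x : S) : ℂ := x.sum fun w c => c * zetaComp (toComp w)

open Classical in
/-- The extended multiple polylogarithm on `S`: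
`Li(u; z) = Σ_j Li(w_j; z) (log z)^j / j!` where `u = Σ_j w_j ⧢ x0^j` with `w_j ∈ S^0`. -/
def Li (u : S) (z : ℂ) : ℂ :=
  if h : ∃ f, HasDecomp0 u f then
    h.choose.sum fun j w => LiS0 w z * Complex.log z ^ j / (Nat.factorial j : ℂ)
  else 0

/-- The domain `D0 = ℂ ∖ {x ∈ ℝ : x ≥ 1}`. -/
def D0 : Set ℂ := {z | ¬ (z.im = 0 ∧ 1 ≤ z.re)}

/-- The domain `D1 = ℂ ∖ {x ∈ ℝ : x ≤ 0}`. -/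
def D1 : Set ℂ := {z | ¬ (z.im = 0 ∧ z.re ≤ 0)}

/-- The ℂ-linear extension of a word-indexed family of functions to `S`. -/
def extLin (h : Word → ℂ → ℂ) (x : S) (z : ℂ) : ℂ := x.sum fun w c => c * h w z

/-- A solution of the additive Riemann–Hilbert problem for multiple polylogarithms. -/
def RHSol (h0 h1 : Word → ℂ → ℂ) : Prop :=
  -- (0) shuffle homomorphisms with prescribed value on `x0`
  (∀ z ∈ D0 ∩ D1,
      (h0 [] z = 1 ∧ h1 [] z = 1) ∧
      (∀ u v : Word,
          extLin h0 (sh (wordS u) (wordS v)) z = h0 u z * h0 v z ∧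
          extLin h1 (sh (wordS u) (wordS v)) z = h1 u z * h1 v z) ∧
      h0 [false] z = Complex.log z ∧ h1 [false] z = Complex.log (1 - z)) ∧
  -- (1) holomorphy and the functional equation
  (∀ w : Word,
      DifferentiableOn ℂ (fun z => extLin h0 (reg0 (wordS w)) z) D0 ∧
      DifferentiableOn ℂ (fun z => extLin h1 (reg0 (wordS w)) z) D1 ∧
      ∀ z ∈ D0 ∩ D1,
        ∑ k ∈ Finset.range (w.length + 1),
            h1 (tau (w.take k)) z * h0 (w.drop k) z = zetaS (reg10 (wordS w))) ∧
  -- (2) asymptotic condition at infinity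
  (∀ w : Word,
      Filter.Tendsto (deriv fun z => extLin h0 (reg0 (wordS w)) z)
        (Bornology.cobounded ℂ ⊓ Filter.principal D0) (nhds 0) ∧
      Filter.Tendsto (deriv fun z => extLin h1 (reg0 (wordS w)) z)
        (Bornology.cobounded ℂ ⊓ Filter.principal D1) (nhds 0)) ∧
  -- (3) normalization at the origin
  (∀ w : Word, extLin h0 (reg0 (wordS w)) 0 = 0)


/-! ### Auxiliary development -/

section Aux

lemma shWord_nil_left' (v : Word) : shWord [] v = Finsupp.single v 1 := by
  cases v
  · rw [shWord]
  · rw [shWord]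

lemma shWord_nil_right' (u : Word) : shWord u [] = Finsupp.single u 1 := by
  cases u
  · rw [shWord]
  · rw [shWord]
    simp

lemma shWord_cons_cons (a b : Bool) (u v : Word) :
    shWord (a :: u) (b :: v) =
      (shWord u (b :: v)).mapDomain (a :: ·) + (shWord (a :: u) v).mapDomain (b :: ·) := by
  rw [shWord]

lemma sh_single_single (u v : Word) (a b : ℂ) :
    sh (Finsupp.single u a) (Finsupp.single v b) = (a * b) • shWord u v := by
  unfold sh
  rw [Finsupp.sum_single_index (by simp), Finsupp.sum_single_index (by simp)]

lemma sh_wordS_wordS (u v : Word) : sh (wordS u) (wordS v) = shWord u v := by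
  simp [wordS, sh_single_single]

lemma sh_zero_left (y : S) : sh 0 y = 0 := by simp [sh]

lemma sh_zero_right (x : S) : sh x 0 = 0 := by simp [sh]

lemma sh_add_left (x x' y : S) : sh (x + x') y = sh x y + sh x' y := by
  unfold sh
  rw [Finsupp.sum_add_index (by simp) ?_]
  intro u _ a a'
  rw [← Finsupp.sum_add]
  congr 1; ext v b
  rw [add_mul, add_smul]

lemma sh_add_right (x y y' : S) : sh x (y + y') = sh x y + sh x y' := by
  unfold sh
  rw [← Finsupp.sum_add]
  congr 1; ext u a
  rw [Finsupp.sum_add_index (by simp) ?_]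
  intro v _ b b'
  rw [mul_add, add_smul]

lemma sh_smul_left (c : ℂ) (x y : S) : sh (c • x) y = c • sh x y := by
  unfold sh
  rw [Finsupp.sum_smul_index (by simp), Finsupp.smul_sum]
  refine Finsupp.sum_congr fun u _ => ?_
  rw [Finsupp.smul_sum]
  refine Finsupp.sum_congr fun v _ => ?_
  rw [mul_assoc, mul_smul]

lemma sh_smul_right (c : ℂ) (x y : S) : sh x (c • y) = c • sh x y := by
  unfold sh
  rw [Finsupp.smul_sum]
  refine Finsupp.sum_congr fun u _ => ?_
  rw [Finsupp.sum_smul_index (by simp), Finsupp.smul_sum]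
  refine Finsupp.sum_congr fun v _ => ?_
  rw [mul_left_comm, mul_smul]

/-- `sh · y` as an additive monoid hom. -/
def shL (y : S) : S →+ S :=
  AddMonoidHom.mk' (fun x => sh x y) (fun a b => sh_add_left a b y)

/-- `sh x ·` as an additive monoid hom. -/
def shR (x : S) : S →+ S :=
  AddMonoidHom.mk' (fun y => sh x y) (fun a b => sh_add_right x a b)

lemma sh_wordS_nil_right (x : S) : sh x (wordS []) = x := by
  unfold sh wordS
  have : ∀ u : Word, ∀ a : ℂ,
      ((Finsupp.single ([] : Word) (1:ℂ)).sum fun v b => (a * b) • shWord u v)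
        = Finsupp.single u a := by
    intro u a
    rw [Finsupp.sum_single_index (by simp), shWord_nil_right', mul_one, Finsupp.smul_single,
      smul_eq_mul, mul_one]
  rw [Finsupp.sum_congr fun u _ => this u (x u)]
  exact Finsupp.sum_single x

lemma sh_wordS_nil_left (y : S) : sh (wordS []) y = y := by
  unfold sh wordS
  rw [Finsupp.sum_single_index (by simp)]
  have : ∀ v : Word, ∀ b : ℂ, ((1:ℂ) * b) • shWord [] v = Finsupp.single v b := by
    intro v b
    rw [shWord_nil_left', one_mul, Finsupp.smul_single, smul_eq_mul, mul_one]
  rw [Finsupp.sum_congr fun v _ => this v (y v)]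
  exact Finsupp.sum_single y

end Aux

section Aux2

lemma mem_support_mapDomain_cons {a : Bool} {X : S} {w : Word}
    (h : w ∈ (X.mapDomain (a :: ·)).support) : ∃ w', w = a :: w' ∧ w' ∈ X.support := by
  have h2 := Finsupp.mapDomain_support h
  obtain ⟨w', hw', rfl⟩ := Finset.mem_image.1 h2
  exact ⟨w', rfl, hw'⟩

lemma count_of_mem_support_shWord (u v : Word) :
    ∀ w ∈ (shWord u v).support, ∀ b, w.count b = u.count b + v.count b := by
  induction u, v using shWord.induct with
  | case1 v =>
    intro w hw b
    rw [shWord_nil_left', Finsupp.support_single_ne_zero _ one_ne_zero] at hw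
    rw [Finset.mem_singleton.1 hw]; simp
  | case2 u h =>
    intro w hw b
    rw [shWord_nil_right', Finsupp.support_single_ne_zero _ one_ne_zero] at hw
    rw [Finset.mem_singleton.1 hw]; simp
  | case3 a u b v ih1 ih2 =>
    intro w hw c
    rw [shWord_cons_cons] at hw
    rcases Finset.mem_union.1 (Finsupp.support_add hw) with h | h
    · obtain ⟨w', rfl, hw'⟩ := mem_support_mapDomain_cons h
      have := ih1 w' hw' c
      simp only [List.count_cons, this]; omega
    · obtain ⟨w', rfl, hw'⟩ := mem_support_mapDomain_cons h
      have := ih2 w' hw' c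
      simp only [List.count_cons, this]; omega

lemma x0pow_zero : x0pow 0 = [] := rfl

lemma x0pow_succ (j : ℕ) : x0pow (j + 1) = false :: x0pow j := rfl

lemma x0pow_succ' (j : ℕ) : x0pow (j + 1) = x0pow j ++ [false] := by
  simp [x0pow, List.replicate_succ']

lemma count_true_x0pow (j : ℕ) : (x0pow j).count true = 0 := by
  simp [x0pow, List.count_replicate]

lemma endsInX1_cons {a : Bool} {w : Word} (h : EndsInX1 (a :: w)) : EndsInX1 w := by
  rcases h with h | h
  · cases h
  · cases w with
    | nil => exact Or.inl rfl
    | cons b w' => exact Or.inr (by rwa [List.getLast?_cons_cons] at h)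

lemma endsInX1_cons_nil {a : Bool} (h : EndsInX1 (a :: ([] : Word))) : a = true := by
  rcases h with h | h
  · cases h
  · simpa using h

lemma true_mem_of_endsInX1 {w : Word} (h : EndsInX1 w) (hne : w ≠ []) : true ∈ w := by
  rcases h with h | h
  · exact absurd h hne
  · have : w.getLast hne = true := by
      rw [List.getLast?_eq_getLast hne] at h
      exact Option.some.inj h
    rw [← this]
    exact List.getLast_mem hne

lemma count_true_pos_of_endsInX1 {w : Word} (h : EndsInX1 w) (hne : w ≠ []) :
    0 < w.count true :=
  List.count_pos_iff.2 (true_mem_of_endsInX1 h hne)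

lemma shWord_x0pow_apply_count_zero {w : Word} (hw : EndsInX1 w) (hne : w ≠ []) (j : ℕ)
    {t : Word} (ht : t.count true = 0) : shWord w (x0pow j) t = 0 := by
  by_contra h
  have hmem : t ∈ (shWord w (x0pow j)).support := Finsupp.mem_support_iff.2 h
  have := count_of_mem_support_shWord w (x0pow j) t hmem true
  rw [ht, count_true_x0pow] at this
  have := count_true_pos_of_endsInX1 hw hne
  omega

/-- Uniqueness of the representation `w = v ++ x0^N` with `v ∈ S^0`. -/
lemma append_x0pow_inj {a b : Word} (ha : EndsInX1 a) (hb : EndsInX1 b) :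
    ∀ {m k : ℕ}, a ++ x0pow m = b ++ x0pow k → a = b ∧ m = k := by
  intro m
  induction m generalizing b with
  | zero =>
    intro k h
    cases k with
    | zero => simpa using h
    | succ k' =>
      exfalso
      rw [x0pow_zero, List.append_nil, x0pow_succ', ← List.append_assoc] at h
      rcases ha with h' | h'
      · rw [h'] at h; simp at h
      · rw [h, List.getLast?_concat] at h'
        exact Bool.noConfusion (Option.some.inj h')
  | succ m' ih =>
    intro k h
    cases k with
    | zero =>
      exfalso
      rw [x0pow_zero, List.append_nil, x0pow_succ', ← List.append_assoc] at h
      rcases hb with h' | h'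
      · rw [h'] at h; simp at h
      · rw [← h, List.getLast?_concat] at h'
        exact Bool.noConfusion (Option.some.inj h')
    | succ k' =>
      rw [x0pow_succ', x0pow_succ', ← List.append_assoc, ← List.append_assoc] at h
      have h2 := List.append_cancel_right h
      obtain ⟨h3, h4⟩ := ih hb (k := k') h2
      exact ⟨h3, by omega⟩

end Aux2

section Aux3

lemma mapDomain_cons_apply (X : S) (a c : Bool) (t : Word) :
    (X.mapDomain (a :: ·)) (c :: t) = if a = c then X t else 0 := by
  by_cases h : a = c
  · subst h
    rw [if_pos rfl]
    exact Finsupp.mapDomain_apply List.cons_injective X t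
  · rw [if_neg h]
    refine Finsupp.mapDomain_notin_range X _ ?_
    rintro ⟨t', ht'⟩
    exact h (List.head_eq_of_cons_eq ht')

lemma mapDomain_cons_apply_nil (X : S) (a : Bool) : (X.mapDomain (a :: ·)) [] = 0 :=
  Finsupp.mapDomain_notin_range _ _ (by rintro ⟨t, ht⟩; cases ht)

lemma x0pow_inj {j N : ℕ} (h : x0pow j = x0pow N) : j = N := by
  have := congrArg List.length h
  simpa [x0pow] using this

lemma eq_append_x0pow_iff {w v : Word} (hw : EndsInX1 w) (hv : EndsInX1 v) {N : ℕ} :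
    w = v ++ x0pow N ↔ (w = v ∧ N = 0) := by
  constructor
  · intro h
    have h2 : w ++ x0pow 0 = v ++ x0pow N := by simpa [x0pow_zero] using h
    obtain ⟨h3, h4⟩ := append_x0pow_inj hw hv h2
    exact ⟨h3, h4.symm⟩
  · rintro ⟨rfl, rfl⟩
    simp [x0pow_zero]

lemma x0pow_eq_append_iff {v : Word} (hv : EndsInX1 v) {k N : ℕ} :
    x0pow k = v ++ x0pow N ↔ (v = [] ∧ k = N) := by
  constructor
  · intro h
    have h2 : [] ++ x0pow k = v ++ x0pow N := by simpa using h
    obtain ⟨h3, h4⟩ := append_x0pow_inj (Or.inl rfl) hv h2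
    exact ⟨h3.symm, h4⟩
  · rintro ⟨rfl, rfl⟩
    simp

lemma true_count_nil : ([] : Word).count true = 0 := rfl

/-- The key coefficient computation: for `w, v ∈ S^0`,
the coefficient of `v x0^N` in `w ⧢ x0^j`. -/
lemma Lstar : ∀ (w : Word) (j : ℕ) (v : Word) (N : ℕ), EndsInX1 w → EndsInX1 v →
    shWord w (x0pow j) (v ++ x0pow N) = if N ≤ j then shWord w (x0pow (j - N)) v else 0
  | [], j, v, N, _, hv => by
    rw [shWord_nil_left', shWord_nil_left', Finsupp.single_apply, Finsupp.single_apply]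
    by_cases hveq : v = []
    · subst hveq
      by_cases hjN : j = N
      · subst hjN
        simp [x0pow]
      · rw [if_neg (show ¬ x0pow j = [] ++ x0pow N from fun h => hjN (x0pow_inj (by simpa using h)))]
        by_cases hNj : N ≤ j
        · rw [if_pos hNj, if_neg (show ¬ x0pow (j - N) = [] from by
            intro h; simp [x0pow, List.replicate_eq_nil_iff] at h; omega)]
        · rw [if_neg hNj]
    · rw [if_neg (show ¬ x0pow j = v ++ x0pow N from fun h => hveq ((x0pow_eq_append_iff hv).1 h).1)]
      by_cases hNj : N ≤ j
      · rw [if_pos hNj, if_neg (show ¬ x0pow (j - N) = v from by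
          intro h
          rcases (x0pow_eq_append_iff hv (N := 0)).1 (by simpa [x0pow_zero] using h) with ⟨h1, -⟩
          exact hveq h1)]
      · rw [if_neg hNj]
  | a :: w', 0, v, N, hw, hv => by
    rw [x0pow_zero, shWord_nil_right', Finsupp.single_apply]
    cases N with
    | zero =>
      rw [if_pos (Nat.le_refl 0), x0pow_zero, shWord_nil_right', Finsupp.single_apply]
      simp [x0pow_zero]
    | succ N' =>
      rw [if_neg (show ¬ N' + 1 ≤ 0 by omega),
        if_neg (show ¬ a :: w' = v ++ x0pow (N' + 1) from fun h => by
          obtain ⟨-, h2⟩ := (eq_append_x0pow_iff hw hv).1 h; omega)]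
  | a :: w', j' + 1, v, N, hw, hv => by
    have hw' : EndsInX1 w' := endsInX1_cons hw
    have hft : ¬ ((false : Bool) = true) := by simp
    rw [x0pow_succ j', shWord_cons_cons, ← x0pow_succ j', Finsupp.add_apply]
    cases v with
    | cons b v' =>
      rw [List.cons_append, mapDomain_cons_apply, mapDomain_cons_apply]
      cases b with
      | true =>
        have hv' : EndsInX1 v' := endsInX1_cons hv
        rw [if_neg hft, add_zero, Lstar w' (j' + 1) v' N hw' hv']
        by_cases hNj : N ≤ j' + 1
        · simp only [if_pos hNj]
          cases hm : j' + 1 - N with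
          | zero =>
            simp only [x0pow_zero, shWord_nil_right', Finsupp.single_apply]
            by_cases ha : a = true <;> by_cases h : w' = v' <;> simp [ha, h]
          | succ m' =>
            conv_rhs => rw [x0pow_succ m', shWord_cons_cons]
            rw [← x0pow_succ m', Finsupp.add_apply, mapDomain_cons_apply,
              mapDomain_cons_apply, if_neg hft, add_zero]
        · simp only [if_neg hNj, ite_self]
      | false =>
        have hv'ne : v' ≠ [] := fun h => by
          subst h; exact Bool.noConfusion (endsInX1_cons_nil hv)
        have hv' : EndsInX1 v' := endsInX1_cons hv
        rw [if_pos (show (false : Bool) = false from rfl), Lstar w' (j' + 1) v' N hw' hv',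
          Lstar (a :: w') j' v' N hw hv']
        by_cases hNj' : N ≤ j'
        · have hNj : N ≤ j' + 1 := by omega
          have hsub : j' + 1 - N = (j' - N) + 1 := by omega
          simp only [if_pos hNj, if_pos hNj', hsub]
          conv_rhs => rw [x0pow_succ (j' - N), shWord_cons_cons]
          rw [← x0pow_succ (j' - N), Finsupp.add_apply, mapDomain_cons_apply,
            mapDomain_cons_apply, if_pos (show (false : Bool) = false from rfl)]
        · by_cases hNj : N ≤ j' + 1
          · have h0 : j' + 1 - N = 0 := by omega
            simp only [if_pos hNj, if_neg hNj', add_zero, h0, x0pow_zero, shWord_nil_right',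
              Finsupp.single_apply]
            by_cases ha : a = false <;> by_cases h : w' = v' <;> simp [ha, h]
          · simp only [if_neg hNj, if_neg hNj', ite_self, add_zero]
    | nil =>
      cases N with
      | zero =>
        rw [x0pow_zero, List.nil_append, mapDomain_cons_apply_nil, mapDomain_cons_apply_nil,
          if_pos (Nat.zero_le (j' + 1)),
          shWord_x0pow_apply_count_zero hw (List.cons_ne_nil a w') _ true_count_nil]
        simp
      | succ N'' =>
        rw [List.nil_append, x0pow_succ N'', mapDomain_cons_apply, mapDomain_cons_apply,
          if_pos (show (false : Bool) = false from rfl),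
          shWord_x0pow_apply_count_zero hw (List.cons_ne_nil a w') j' (count_true_x0pow N'')]
        have h1 : (if a = false then (shWord w' (x0pow (j' + 1))) (x0pow N'') else 0) = 0 := by
          by_cases ha : a = false
          · subst ha
            have hw'ne : w' ≠ [] := fun h => by
              subst h; exact Bool.noConfusion (endsInX1_cons_nil hw)
            rw [if_pos rfl,
              shWord_x0pow_apply_count_zero hw' hw'ne _ (count_true_x0pow N'')]
          · rw [if_neg ha]
        rw [h1, add_zero]
        by_cases hNj : N'' + 1 ≤ j' + 1
        · rw [if_pos hNj,
            shWord_x0pow_apply_count_zero hw (List.cons_ne_nil a w') _ true_count_nil]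
        · rw [if_neg hNj]
termination_by w j v N => w.length + j
decreasing_by all_goals (simp only [List.length_cons]; omega)

end Aux3

section Aux4

lemma wordS_def (w : Word) : wordS w = Finsupp.single w 1 := rfl

lemma sh_apply_single_right (x : S) (q t : Word) :
    (sh x (wordS q)) t = x.sum fun w c => c * shWord w q t := by
  unfold sh wordS
  rw [Finsupp.sum_apply]
  refine Finsupp.sum_congr fun w hw => ?_
  rw [Finsupp.sum_single_index (by simp), Finsupp.smul_apply, smul_eq_mul, mul_one]

lemma LstarS {x : S} (hx : InS0 x) (j : ℕ) {v : Word} (hv : EndsInX1 v) (N : ℕ) :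
    (sh x (wordS (x0pow j))) (v ++ x0pow N) =
      if N ≤ j then (sh x (wordS (x0pow (j - N)))) v else 0 := by
  rw [sh_apply_single_right]
  by_cases hNj : N ≤ j
  · simp only [if_pos hNj]
    rw [sh_apply_single_right]
    refine Finsupp.sum_congr fun w hw => ?_
    rw [Lstar w j v N (hx w hw) hv, if_pos hNj]
  · simp only [if_neg hNj]
    rw [Finsupp.sum]
    refine Finset.sum_eq_zero fun w hw => ?_
    rw [Lstar w j v N (hx w hw) hv, if_neg hNj, mul_zero]

lemma decomp0Sum_eq_zero {f : ℕ →₀ S} (hf : ∀ j, InS0 (f j)) (h : decomp0Sum f = 0) :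
    f = 0 := by
  by_contra hne
  have hsupp : f.support.Nonempty := Finsupp.support_nonempty_iff.2 hne
  set N := f.support.max' hsupp with hN
  have hNmem : N ∈ f.support := f.support.max'_mem hsupp
  have hfN : f N ≠ 0 := Finsupp.mem_support_iff.1 hNmem
  obtain ⟨v, hv⟩ := Finsupp.support_nonempty_iff.2 hfN
  have hvends : EndsInX1 v := hf N v hv
  have key : decomp0Sum f (v ++ x0pow N) = f N v := by
    unfold decomp0Sum
    rw [Finsupp.sum_apply, Finsupp.sum, Finset.sum_eq_single N]
    · rw [LstarS (hf N) N hvends N, if_pos (le_refl N), Nat.sub_self, x0pow_zero,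
        sh_wordS_nil_right]
    · intro j hj hjne
      have hjN : j ≤ N := Finset.le_max' _ j hj
      rw [LstarS (hf j) j hvends N, if_neg (by omega)]
    · intro hnot
      exact absurd hNmem hnot
  rw [h] at key
  exact Finsupp.mem_support_iff.1 hv (by simpa using key.symm)

lemma sh_neg_left (x y : S) : sh (-x) y = - sh x y := by
  have : (-x) = (-1 : ℂ) • x := by rw [neg_smul, one_smul]
  rw [this, sh_smul_left, neg_smul, one_smul]

lemma sh_sub_left (x x' y : S) : sh (x - x') y = sh x y - sh x' y := by
  rw [sub_eq_add_neg, sh_add_left, sh_neg_left, sub_eq_add_neg]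

lemma decomp0Sum_sub (f g : ℕ →₀ S) : decomp0Sum (f - g) = decomp0Sum f - decomp0Sum g := by
  unfold decomp0Sum
  apply Finsupp.sum_sub_index
  intro j w w'
  exact sh_sub_left w w' _

lemma hasDecomp0_unique {x : S} {f g : ℕ →₀ S} (hf : HasDecomp0 x f) (hg : HasDecomp0 x g) :
    f = g := by
  have h1 : ∀ j, InS0 ((f - g) j) := by
    intro j w hw
    rw [Finsupp.sub_apply] at hw
    rcases Finset.mem_union.1 (Finsupp.support_sub hw) with h | h
    · exact hf.1 j w h
    · exact hg.1 j w h
  have h2 : decomp0Sum (f - g) = 0 := by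
    rw [decomp0Sum_sub, ← hf.2, ← hg.2, sub_self]
  have h3 := decomp0Sum_eq_zero h1 h2
  exact sub_eq_zero.1 h3

lemma reg0_eq_of_hasDecomp0 {x : S} {f : ℕ →₀ S} (hf : HasDecomp0 x f) : reg0 x = f 0 := by
  have hex : ∃ g, HasDecomp0 x g := ⟨f, hf⟩
  rw [reg0, dif_pos hex, hasDecomp0_unique hex.choose_spec hf]

lemma shWord_x0pow_x0pow (i : ℕ) : ∀ j : ℕ,
    shWord (x0pow i) (x0pow j) = ((i + j).choose i : ℂ) • Finsupp.single (x0pow (i + j)) 1 := by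
  induction i with
  | zero =>
    intro j
    simp [x0pow_zero, shWord_nil_left']
  | succ i' ih =>
    intro j
    induction j with
    | zero =>
      rw [x0pow_zero, shWord_nil_right']
      simp
    | succ j' ihj =>
      rw [x0pow_succ i', x0pow_succ j', shWord_cons_cons, ← x0pow_succ i', ← x0pow_succ j',
        ih (j' + 1), ihj, Finsupp.mapDomain_smul, Finsupp.mapDomain_smul,
        Finsupp.mapDomain_single, Finsupp.mapDomain_single, ← x0pow_succ (i' + (j' + 1)),
        ← x0pow_succ (i' + 1 + j')]
      rw [show i' + (j' + 1) + 1 = i' + 1 + (j' + 1) from by omega,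
        show i' + 1 + j' + 1 = i' + 1 + (j' + 1) from by omega, ← add_smul]
      congr 1
      rw [show i' + 1 + (j' + 1) = (i' + (j' + 1)) + 1 from by omega]
      rw [Nat.choose_succ_succ (i' + (j' + 1)) i']
      push_cast
      rw [show i' + (j' + 1) = i' + 1 + j' from by omega]

end Aux4

section Aux5

lemma single_eq_smul_wordS (p : Word) (b : ℂ) : Finsupp.single p b = b • wordS p := by
  rw [wordS, Finsupp.smul_single, smul_eq_mul, mul_one]

lemma sh_single_wordS (p : Word) (b : ℂ) (q : Word) :
    sh (Finsupp.single p b) (wordS q) = b • shWord p q := by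
  rw [wordS, sh_single_single, mul_one]

lemma sh_wordS_single (p : Word) (b : ℂ) (q : Word) :
    sh (wordS q) (Finsupp.single p b) = b • shWord q p := by
  rw [wordS, sh_single_single, one_mul]

lemma sh_mapDomain_cons (x : S) (a c : Bool) (w' : Word) :
    sh (x.mapDomain (a :: ·)) (wordS (c :: w')) =
      (sh x (wordS (c :: w'))).mapDomain (a :: ·)
        + (sh (x.mapDomain (a :: ·)) (wordS w')).mapDomain (c :: ·) := by
  induction x using Finsupp.induction with
  | zero =>
    rw [Finsupp.mapDomain_zero, sh_zero_left, sh_zero_left, Finsupp.mapDomain_zero,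
      Finsupp.mapDomain_zero, add_zero]
  | single_add p b f hp hb ih =>
    rw [Finsupp.mapDomain_add, sh_add_left, sh_add_left, sh_add_left, Finsupp.mapDomain_add,
      Finsupp.mapDomain_add, ih, Finsupp.mapDomain_single, sh_single_wordS, sh_single_wordS,
      sh_single_wordS, shWord_cons_cons, smul_add, Finsupp.mapDomain_smul,
      Finsupp.mapDomain_smul, add_add_add_comm]

lemma sh_cons_mapDomain (a : Bool) (u' : Word) (y : S) (b : Bool) :
    sh (wordS (a :: u')) (y.mapDomain (b :: ·)) =
      (sh (wordS u') (y.mapDomain (b :: ·))).mapDomain (a :: ·)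
        + (sh (wordS (a :: u')) y).mapDomain (b :: ·) := by
  induction y using Finsupp.induction with
  | zero =>
    rw [Finsupp.mapDomain_zero, sh_zero_right, sh_zero_right, Finsupp.mapDomain_zero,
      Finsupp.mapDomain_zero, add_zero]
  | single_add p d f hp hd ih =>
    rw [Finsupp.mapDomain_add, sh_add_right, sh_add_right, sh_add_right, Finsupp.mapDomain_add,
      Finsupp.mapDomain_add, ih, Finsupp.mapDomain_single, sh_wordS_single, sh_wordS_single,
      sh_wordS_single, shWord_cons_cons, smul_add, Finsupp.mapDomain_smul,
      Finsupp.mapDomain_smul, add_add_add_comm]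

lemma shWord_assoc : ∀ (u v w : Word),
    sh (shWord u v) (wordS w) = sh (wordS u) (shWord v w)
  | [], v, w => by
    rw [shWord_nil_left', ← wordS_def, sh_wordS_wordS, sh_wordS_nil_left]
  | a :: u', [], w => by
    rw [shWord_nil_right', ← wordS_def, shWord_nil_left', ← wordS_def, sh_wordS_wordS]
  | a :: u', b :: v', [] => by
    rw [sh_wordS_nil_right, shWord_nil_right', ← wordS_def, sh_wordS_wordS]
  | a :: u', b :: v', c :: w' => by
    have IH1 := shWord_assoc u' (b :: v') (c :: w')
    have IH2 := shWord_assoc (a :: u') v' (c :: w')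
    have IH3 := shWord_assoc (a :: u') (b :: v') w'
    calc sh (shWord (a :: u') (b :: v')) (wordS (c :: w'))
        = (sh (wordS u') (shWord (b :: v') (c :: w'))).mapDomain (a :: ·)
            + ((sh (wordS (a :: u')) (shWord v' (c :: w'))).mapDomain (b :: ·)
              + (sh (wordS (a :: u')) (shWord (b :: v') w')).mapDomain (c :: ·)) := by
          rw [shWord_cons_cons a b u' v', sh_add_left,
            sh_mapDomain_cons (shWord u' (b :: v')) a c w',
            sh_mapDomain_cons (shWord (a :: u') v') b c w', IH1, IH2,
            add_add_add_comm, add_assoc, ← Finsupp.mapDomain_add, ← sh_add_left,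
            ← shWord_cons_cons, IH3]
      _ = sh (wordS (a :: u')) (shWord (b :: v') (c :: w')) := by
          conv_rhs => rw [shWord_cons_cons b c v' w', sh_add_right,
            sh_cons_mapDomain a u' (shWord v' (c :: w')) b,
            sh_cons_mapDomain a u' (shWord (b :: v') w') c]
          rw [add_add_add_comm, ← Finsupp.mapDomain_add, ← sh_add_right, ← shWord_cons_cons]
  termination_by u v w => u.length + v.length + w.length
  decreasing_by all_goals (simp only [List.length_cons]; omega)

set_option maxHeartbeats 1000000 in
lemma sh_assoc_words (x : S) (v w : Word) :
    sh (sh x (wordS v)) (wordS w) = sh x (sh (wordS v) (wordS w)) := by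
  induction x using Finsupp.induction with
  | zero => rw [sh_zero_left, sh_zero_left, sh_zero_left]
  | single_add p b f hp hb ih =>
    rw [sh_add_left, sh_add_left, sh_add_left, ih]
    congr 1
    rw [single_eq_smul_wordS, sh_smul_left, sh_smul_left, sh_smul_left]
    congr 1
    rw [sh_wordS_wordS, sh_wordS_wordS, shWord_assoc]

lemma sh_sh_x0pow (x : S) (i j : ℕ) :
    sh (sh x (wordS (x0pow i))) (wordS (x0pow j)) =
      (((i + j).choose i : ℕ) : ℂ) • sh x (wordS (x0pow (i + j))) := by
  rw [sh_assoc_words, sh_wordS_wordS, shWord_x0pow_x0pow, ← wordS_def, sh_smul_right]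

end Aux5

section Aux6

/-- The explicit alternating-sum candidate for `reg0 (u x0^m)`. -/
def rAlt (u : Word) (m : ℕ) : S :=
  ∑ j ∈ Finset.range (m + 1),
    ((-1 : ℂ) ^ j) • sh (wordS (u ++ x0pow (m - j))) (wordS (x0pow j))

lemma shL_apply (y x : S) : shL y x = sh x y := rfl

lemma sum_sum_reindex {M : Type*} [AddCommMonoid M] (n : ℕ) (F : ℕ → ℕ → M) :
    ∑ j ∈ Finset.range (n + 1), ∑ i ∈ Finset.range (n - j + 1), F i j
      = ∑ k ∈ Finset.range (n + 1), ∑ i ∈ Finset.range (k + 1), F i (k - i) := by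
  rw [Finset.sum_sigma', Finset.sum_sigma']
  refine Finset.sum_bij' (fun p _ => (⟨p.2 + p.1, p.2⟩ : Σ _ : ℕ, ℕ))
    (fun p _ => (⟨p.1 - p.2, p.2⟩ : Σ _ : ℕ, ℕ)) ?_ ?_ ?_ ?_ ?_
  · intro p hp
    simp only [Finset.mem_sigma, Finset.mem_range] at hp ⊢
    omega
  · intro p hp
    simp only [Finset.mem_sigma, Finset.mem_range] at hp ⊢
    omega
  · intro p hp
    simp only [Finset.mem_sigma, Finset.mem_range] at hp
    ext <;> simp <;> omega
  · intro p hp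
    simp only [Finset.mem_sigma, Finset.mem_range] at hp
    ext <;> simp <;> omega
  · intro p hp
    simp only [Finset.mem_sigma, Finset.mem_range] at hp
    have : p.2 + p.1 - p.2 = p.1 := by omega
    simp [this]

lemma alternating_choose_complex (k : ℕ) :
    ∑ i ∈ Finset.range (k + 1), ((-1 : ℂ) ^ i * (k.choose i : ℕ)) =
      if k = 0 then 1 else 0 := by
  have hz := Int.alternating_sum_range_choose (n := k)
  have h2 := congrArg (fun z : ℤ => (z : ℂ)) hz
  push_cast at h2
  simpa using h2

lemma B_identity (u : Word) (n : ℕ) :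
    ∑ j ∈ Finset.range (n + 1), sh (rAlt u (n - j)) (wordS (x0pow j))
      = wordS (u ++ x0pow n) := by
  have step1 : ∀ j, sh (rAlt u (n - j)) (wordS (x0pow j))
      = ∑ i ∈ Finset.range ((n - j) + 1),
          ((-1 : ℂ) ^ i * (((i + j).choose i : ℕ) : ℂ))
            • sh (wordS (u ++ x0pow (n - j - i))) (wordS (x0pow (i + j))) := by
    intro j
    rw [rAlt, ← shL_apply, map_sum]
    refine Finset.sum_congr rfl fun i _ => ?_
    rw [shL_apply, sh_smul_left, sh_sh_x0pow, smul_smul]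
  rw [Finset.sum_congr rfl fun j _ => step1 j,
    sum_sum_reindex n (fun i j => ((-1 : ℂ) ^ i * (((i + j).choose i : ℕ) : ℂ))
      • sh (wordS (u ++ x0pow (n - j - i))) (wordS (x0pow (i + j))))]
  have step2 : ∀ k ∈ Finset.range (n + 1),
      (∑ i ∈ Finset.range (k + 1), ((-1 : ℂ) ^ i * (((i + (k - i)).choose i : ℕ) : ℂ))
        • sh (wordS (u ++ x0pow (n - (k - i) - i))) (wordS (x0pow (i + (k - i)))))
      = (if k = 0 then (1 : ℂ) else 0) • sh (wordS (u ++ x0pow (n - k))) (wordS (x0pow k)) := by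
    intro k _
    have hterm : ∀ i ∈ Finset.range (k + 1),
        ((-1 : ℂ) ^ i * (((i + (k - i)).choose i : ℕ) : ℂ))
          • sh (wordS (u ++ x0pow (n - (k - i) - i))) (wordS (x0pow (i + (k - i))))
        = ((-1 : ℂ) ^ i * ((k.choose i : ℕ) : ℂ))
            • sh (wordS (u ++ x0pow (n - k))) (wordS (x0pow k)) := by
      intro i hi
      rw [Finset.mem_range, Nat.lt_succ_iff] at hi
      have h1 : i + (k - i) = k := by omega
      have h2 : n - (k - i) - i = n - k := by omega
      rw [h1, h2]
    rw [Finset.sum_congr rfl hterm, ← Finset.sum_smul, alternating_choose_complex]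
  rw [Finset.sum_congr rfl step2, Finset.sum_eq_single 0]
  · rw [if_pos rfl, one_smul, Nat.sub_zero, x0pow_zero, sh_wordS_nil_right]
  · intro k _ hkne
    rw [if_neg hkne, zero_smul]
  · intro h
    exact absurd (Finset.mem_range.2 (Nat.succ_pos n)) h

lemma inS0_zero : InS0 0 := by
  intro w hw
  simp at hw

lemma x0pow_add (a b : ℕ) : x0pow (a + b) = x0pow a ++ x0pow b := by
  unfold x0pow
  exact List.replicate_add a b false

lemma exists_strip (z : Word) : ∃ v N, EndsInX1 v ∧ z = v ++ x0pow N := by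
  induction z using List.reverseRecOn with
  | nil => exact ⟨[], 0, Or.inl rfl, by simp [x0pow_zero]⟩
  | append_singleton zs b ih =>
    cases b with
    | true => exact ⟨zs ++ [true], 0, Or.inr List.getLast?_concat, by simp [x0pow_zero]⟩
    | false =>
      obtain ⟨v, N, hv, rfl⟩ := ih
      exact ⟨v, N + 1, hv, by rw [x0pow_succ' N, List.append_assoc]⟩

end Aux6

section Aux7

lemma inS0_rAlt (u : Word) (hu : EndsInX1 u) : ∀ n, InS0 (rAlt u n) := by
  intro n
  induction n using Nat.strong_induction_on with
  | _ n IH =>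
    intro z hz
    by_contra hzend
    obtain ⟨v, N, hvends, rfl⟩ := exists_strip z
    have hN : N ≠ 0 := by
      intro h
      subst h
      exact hzend (by simpa [x0pow_zero] using hvends)
    have hB := B_identity u n
    rw [Finset.sum_range_succ'] at hB
    rw [Nat.sub_zero, x0pow_zero, sh_wordS_nil_right] at hB
    have hval : rAlt u n = wordS (u ++ x0pow n)
        - ∑ j ∈ Finset.range n, sh (rAlt u (n - (j + 1))) (wordS (x0pow (j + 1))) := by
      rw [← hB]
      abel
    have hcoeff : rAlt u n (v ++ x0pow N) = 0 := by
      rw [hval, Finsupp.sub_apply, Finset.sum_apply']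
      have hterm : ∀ j ∈ Finset.range n,
          (sh (rAlt u (n - (j + 1))) (wordS (x0pow (j + 1)))) (v ++ x0pow N)
            = if N ≤ j + 1
                then (sh (rAlt u (n - (j + 1))) (wordS (x0pow (j + 1 - N)))) v else 0 :=
        fun j hj =>
          LstarS (IH (n - (j + 1)) (by rw [Finset.mem_range] at hj; omega)) (j + 1) hvends N
      rw [Finset.sum_congr rfl hterm]
      by_cases hnN : n < N
      · rw [Finset.sum_eq_zero (fun j hj => by
          rw [Finset.mem_range] at hj
          rw [if_neg (show ¬ N ≤ j + 1 by omega)]), sub_zero, wordS_def,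
          Finsupp.single_apply,
          if_neg (fun h => by
            obtain ⟨-, h2⟩ := append_x0pow_inj hu hvends h
            omega)]
      · push_neg at hnN
        have hsplit : (∑ j ∈ Finset.range n, if N ≤ j + 1
              then (sh (rAlt u (n - (j + 1))) (wordS (x0pow (j + 1 - N)))) v else 0)
            = ∑ j ∈ Finset.Ico (N - 1) n,
                (sh (rAlt u (n - (j + 1))) (wordS (x0pow (j + 1 - N)))) v := by
          rw [← Finset.sum_filter]
          congr 1
          ext j
          simp only [Finset.mem_filter, Finset.mem_range, Finset.mem_Ico]
          omega
        rw [hsplit, Finset.sum_Ico_eq_sum_range]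
        set m := n - N with hmdef
        have hm : n - (N - 1) = m + 1 := by omega
        have hcong : ∀ i ∈ Finset.range (m + 1),
            (sh (rAlt u (n - (N - 1 + i + 1))) (wordS (x0pow (N - 1 + i + 1 - N)))) v
              = (sh (rAlt u (m - i)) (wordS (x0pow i))) v := by
          intro i _
          have e1 : n - (N - 1 + i + 1) = m - i := by omega
          have e2 : N - 1 + i + 1 - N = i := by omega
          rw [e1, e2]
        rw [hm, Finset.sum_congr rfl hcong, ← Finset.sum_apply', B_identity u m,
          wordS_def, Finsupp.single_apply, wordS_def, Finsupp.single_apply]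
        by_cases hcase : u ++ x0pow m = v
        · rw [if_pos (show u ++ x0pow n = v ++ x0pow N from by
            rw [← hcase, List.append_assoc, ← x0pow_add, show m + N = n from by omega]),
            if_pos hcase, sub_self]
        · rw [if_neg hcase, if_neg (fun h => by
            apply hcase
            have h5 : u ++ x0pow m ++ x0pow N = v ++ x0pow N := by
              rw [List.append_assoc, ← x0pow_add, show m + N = n from by omega]
              exact h
            exact List.append_cancel_right h5), sub_zero]
    exact (Finsupp.mem_support_iff.1 hz) hcoeff

lemma decomp0Sum_add (f g : ℕ →₀ S) :
    decomp0Sum (f + g) = decomp0Sum f + decomp0Sum g := by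
  unfold decomp0Sum
  exact Finsupp.sum_add_index' (fun j => sh_zero_left _) (fun j w w' => sh_add_left w w' _)

/-- `decomp0Sum` as an additive monoid hom. -/
def decomp0SumHom : (ℕ →₀ S) →+ S := AddMonoidHom.mk' decomp0Sum decomp0Sum_add

lemma decomp0SumHom_apply (f : ℕ →₀ S) : decomp0SumHom f = decomp0Sum f := rfl

lemma decomp0Sum_single (j : ℕ) (x : S) :
    decomp0Sum (Finsupp.single j x) = sh x (wordS (x0pow j)) := by
  unfold decomp0Sum
  exact Finsupp.sum_single_index (sh_zero_left _)

/-- The explicit decomposition of `wordS (u ++ x0pow n)`. -/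
def decompF (u : Word) (n : ℕ) : ℕ →₀ S :=
  ∑ j ∈ Finset.range (n + 1), Finsupp.single j (rAlt u (n - j))

lemma decompF_apply (u : Word) (n k : ℕ) :
    decompF u n k = if k ≤ n then rAlt u (n - k) else 0 := by
  rw [decompF, Finset.sum_apply']
  simp only [Finsupp.single_apply]
  rw [Finset.sum_ite_eq']
  simp [Finset.mem_range, Nat.lt_succ_iff]

lemma hasDecompF (u : Word) (hu : EndsInX1 u) (n : ℕ) :
    HasDecomp0 (wordS (u ++ x0pow n)) (decompF u n) := by
  constructor
  · intro k
    rw [decompF_apply]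
    split_ifs with h
    · exact inS0_rAlt u hu _
    · exact inS0_zero
  · rw [← B_identity u n, decompF, ← decomp0SumHom_apply, map_sum]
    refine Finset.sum_congr rfl fun j _ => ?_
    rw [decomp0SumHom_apply, decomp0Sum_single]

lemma reg0_wordS_append (u : Word) (hu : EndsInX1 u) (n : ℕ) :
    reg0 (wordS (u ++ x0pow n)) = rAlt u n := by
  rw [reg0_eq_of_hasDecomp0 (hasDecompF u hu n), decompF_apply]
  simp

end Aux7

/-- For a word `u ∈ S^0` and `n ≥ 0`:
`u x0^n = Σ_{j=0}^n reg^0(u x0^{n-j}) ⧢ x0^j` and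
`reg^0(u x0^n) = Σ_{j=0}^n (-1)^j (u x0^{n-j}) ⧢ x0^j`. -/
theorem reg0_calc (u : Word) (hu : EndsInX1 u) (n : ℕ) :
    wordS (u ++ x0pow n) =
        ∑ j ∈ Finset.range (n + 1),
          sh (reg0 (wordS (u ++ x0pow (n - j)))) (wordS (x0pow j)) ∧
    reg0 (wordS (u ++ x0pow n)) =
        ∑ j ∈ Finset.range (n + 1),
          ((-1 : ℂ) ^ j) • sh (wordS (u ++ x0pow (n - j))) (wordS (x0pow j)) := by
  constructor
  · conv_lhs => rw [← B_identity u n]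
    refine Finset.sum_congr rfl fun j _ => ?_
    rw [reg0_wordS_append u hu (n - j)]
  · rw [reg0_wordS_append u hu n]
    rfl

end

end MZVRH
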